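/- Let Ω ⊆ ℂ be a nonempty open set, let X : Ω → ℝ⁴ be a C² map, and let Ψ, f₁, f₂ : Ω → ℂ be C¹ functions such that X_z = Ψ·(f₁ + f₂, −i·(f₁ − f₂), 1 − f₁f₂, 1 + f₁f₂) componentwise on Ω. Then at every point of Ω one has the identity ⟨X_{zz̄}, X_{zz̄}⟩ = 4·Ψ²·(f₁)_z̄·(f₂)_z̄ for the ℂ-bilinear Lorentz form. In particular, if Ψ(z) ≠ 0 for all z ∈ Ω and ⟨X_{zz̄}, X_{zz̄}⟩ = 0 on Ω (i.e. the surface is marginally trapped), then for each z ∈ Ω either (f₁)_z̄(z) = 0 or (f₂)_z̄(z) = 0. -/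

import Mathlib

open Complex

/-- Directional derivative of `f` in the direction `1` (the `u`-direction). -/
noncomputable def pdu (f : ℂ → ℂ) (z : ℂ) : ℂ := fderiv ℝ f z 1

/-- Directional derivative of `f` in the direction `i` (the `v`-direction). -/
noncomputable def pdv (f : ℂ → ℂ) (z : ℂ) : ℂ := fderiv ℝ f z Complex.I

/-- Wirtinger derivative `f_z = (1/2)(∂_u f - i ∂_v f)`. -/
noncomputable def wz (f : ℂ → ℂ) (z : ℂ) : ℂ :=
  (1 / 2 : ℂ) * (pdu f z - Complex.I * pdv f z)

/-- Wirtinger derivative `f_z̄ = (1/2)(∂_u f + i ∂_v f)`. -/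
noncomputable def wzb (f : ℂ → ℂ) (z : ℂ) : ℂ :=
  (1 / 2 : ℂ) * (pdu f z + Complex.I * pdv f z)

/-- Mixed Wirtinger derivative `f_{zz̄} = (f_z)_z̄`. -/
noncomputable def wzzb (f : ℂ → ℂ) (z : ℂ) : ℂ := wzb (fun w => wz f w) z

/-- `P_z` for a real-valued function, regarded as ℂ-valued. -/
noncomputable def rz (P : ℂ → ℝ) (z : ℂ) : ℂ := wz (fun w => (P w : ℂ)) z

/-- `P_z̄` for a real-valued function, regarded as ℂ-valued. -/
noncomputable def rzb (P : ℂ → ℝ) (z : ℂ) : ℂ := wzb (fun w => (P w : ℂ)) z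

/-- `P_{zz̄}` for a real-valued function, regarded as ℂ-valued. -/
noncomputable def rzzb (P : ℂ → ℝ) (z : ℂ) : ℂ := wzzb (fun w => (P w : ℂ)) z

/-- Weierstrass data of the first kind on `Ω`. -/
structure IsWD1 (Ω : Set ℂ) (g : ℂ → ℂ) (P Q : ℂ → ℝ) : Prop where
  holo : ∀ z ∈ Ω, DifferentiableAt ℂ g z
  gne : ∀ z ∈ Ω, g z ≠ 0
  cP : ContDiffOn ℝ 2 P Ω
  cQ : ContDiffOn ℝ 2 Q Ω
  pde : ∀ z ∈ Ω, rzzb P z = ((‖g z‖ : ℂ)) ^ 2 * rzzb Q z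
  nz : ∀ z ∈ Ω, rz P z - ((‖g z‖ : ℂ)) ^ 2 * rz Q z ≠ 0

/-- Weierstrass data of the second kind on `Ω`. -/
structure IsWD2 (Ω : Set ℂ) (h : ℂ → ℂ) (M N : ℂ → ℝ) : Prop where
  holo : ∀ z ∈ Ω, DifferentiableAt ℂ h z
  hne : ∀ z ∈ Ω, h z ≠ 0
  cM : ContDiffOn ℝ 2 M Ω
  cN : ContDiffOn ℝ 2 N Ω
  pde : ∀ z ∈ Ω, rzzb M z = (((h z).re : ℂ)) * rzzb N z
  nz : ∀ z ∈ Ω, rz M z - (((h z).re : ℂ)) * rz N z ≠ 0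

/-- Componentwise Wirtinger derivative `X_z` of an ℝ⁴-valued map. -/
noncomputable def vz (X : ℂ → Fin 4 → ℝ) (z : ℂ) : Fin 4 → ℂ :=
  fun i => rz (fun w => X w i) z

/-- Componentwise mixed Wirtinger derivative `X_{zz̄}` of an ℝ⁴-valued map. -/
noncomputable def vzzb (X : ℂ → Fin 4 → ℝ) (z : ℂ) : Fin 4 → ℂ :=
  fun i => rzzb (fun w => X w i) z

/-- The ℂ-bilinear Lorentz form on ℂ⁴. -/
def lorC (x y : Fin 4 → ℂ) : ℂ := x 0 * y 0 + x 1 * y 1 + x 2 * y 2 - x 3 * y 3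

/-- The Lorentz bilinear form on ℝ⁴. -/
def lorR (x y : Fin 4 → ℝ) : ℝ := x 0 * y 0 + x 1 * y 1 + x 2 * y 2 - x 3 * y 3

lemma wzb_congr {f g : ℂ → ℂ} {z : ℂ} (h : f =ᶠ[nhds z] g) : wzb f z = wzb g z := by
  unfold wzb pdu pdv
  rw [h.fderiv_eq]

lemma wzb_mul {f g : ℂ → ℂ} {z : ℂ} (hf : DifferentiableAt ℝ f z)
    (hg : DifferentiableAt ℝ g z) :
    wzb (fun w => f w * g w) z = f z * wzb g z + g z * wzb f z := by
  unfold wzb pdu pdv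
  rw [fderiv_fun_mul hf hg]
  simp only [ContinuousLinearMap.add_apply, ContinuousLinearMap.smul_apply, smul_eq_mul]
  ring

lemma wzb_add {f g : ℂ → ℂ} {z : ℂ} (hf : DifferentiableAt ℝ f z)
    (hg : DifferentiableAt ℝ g z) :
    wzb (fun w => f w + g w) z = wzb f z + wzb g z := by
  unfold wzb pdu pdv
  rw [fderiv_fun_add hf hg]
  simp only [ContinuousLinearMap.add_apply]
  ring

lemma wzb_sub {f g : ℂ → ℂ} {z : ℂ} (hf : DifferentiableAt ℝ f z)
    (hg : DifferentiableAt ℝ g z) :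
    wzb (fun w => f w - g w) z = wzb f z - wzb g z := by
  unfold wzb pdu pdv
  rw [fderiv_fun_sub hf hg]
  simp only [ContinuousLinearMap.sub_apply]
  ring

lemma wzb_const (c : ℂ) (z : ℂ) : wzb (fun _ => c) z = 0 := by
  unfold wzb pdu pdv
  rw [fderiv_fun_const]
  simp

lemma wzb_const_mul (c : ℂ) {f : ℂ → ℂ} {z : ℂ} (hf : DifferentiableAt ℝ f z) :
    wzb (fun w => c * f w) z = c * wzb f z := by
  rw [wzb_mul (differentiableAt_const c) hf, wzb_const]
  ring

lemma wzb_const_add (c : ℂ) {f : ℂ → ℂ} {z : ℂ} (hf : DifferentiableAt ℝ f z) :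
    wzb (fun w => c + f w) z = wzb f z := by
  rw [wzb_add (differentiableAt_const c) hf, wzb_const]
  ring

lemma wzb_const_sub (c : ℂ) {f : ℂ → ℂ} {z : ℂ} (hf : DifferentiableAt ℝ f z) :
    wzb (fun w => c - f w) z = -wzb f z := by
  rw [wzb_sub (differentiableAt_const c) hf, wzb_const]
  ring

/-- The null mean curvature identity for Liu's system, and the holomorphicity
alternative for marginally trapped surfaces. -/
theorem stmt_9 (Ω : Set ℂ) (hΩne : Ω.Nonempty) (hΩopen : IsOpen Ω)
    (X : ℂ → Fin 4 → ℝ) (hX : ∀ i, ContDiffOn ℝ 2 (fun w => X w i) Ω)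
    (Ψ f₁ f₂ : ℂ → ℂ)
    (hΨ : ContDiffOn ℝ 1 Ψ Ω) (hf₁ : ContDiffOn ℝ 1 f₁ Ω) (hf₂ : ContDiffOn ℝ 1 f₂ Ω)
    (hrep : ∀ z ∈ Ω, ∀ i, vz X z i
      = Ψ z * ![f₁ z + f₂ z, -Complex.I * (f₁ z - f₂ z),
          1 - f₁ z * f₂ z, 1 + f₁ z * f₂ z] i) :
    (∀ z ∈ Ω, lorC (vzzb X z) (vzzb X z) = 4 * Ψ z ^ 2 * wzb f₁ z * wzb f₂ z) ∧
      ((∀ z ∈ Ω, Ψ z ≠ 0) → (∀ z ∈ Ω, lorC (vzzb X z) (vzzb X z) = 0) →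
        ∀ z ∈ Ω, wzb f₁ z = 0 ∨ wzb f₂ z = 0) := by
  have main : ∀ z ∈ Ω, lorC (vzzb X z) (vzzb X z) = 4 * Ψ z ^ 2 * wzb f₁ z * wzb f₂ z := by
    intro z hz
    have hnz : Ω ∈ nhds z := hΩopen.mem_nhds hz
    have hΨd : DifferentiableAt ℝ Ψ z := (hΨ.contDiffAt hnz).differentiableAt one_ne_zero
    have hf₁d : DifferentiableAt ℝ f₁ z := (hf₁.contDiffAt hnz).differentiableAt one_ne_zero
    have hf₂d : DifferentiableAt ℝ f₂ z := (hf₂.contDiffAt hnz).differentiableAt one_ne_zero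
    have key : ∀ i : Fin 4,
        vzzb X z i = wzb (fun w => Ψ w * ![f₁ w + f₂ w, -Complex.I * (f₁ w - f₂ w),
          1 - f₁ w * f₂ w, 1 + f₁ w * f₂ w] i) z := by
      intro i
      show wzb (fun w => wz (fun t => ((X t i : ℝ) : ℂ)) w) z = _
      apply wzb_congr
      filter_upwards [hnz] with w hw
      exact hrep w hw i
    have h0 := key 0
    have h1 := key 1
    have h2 := key 2
    have h3 := key 3
    simp only [Matrix.cons_val_zero, Matrix.cons_val_one, Matrix.head_cons,
      Matrix.cons_val_two, Matrix.tail_cons, Matrix.cons_val_three] at h0 h1 h2 h3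
    rw [wzb_mul hΨd (hf₁d.fun_add hf₂d), wzb_add hf₁d hf₂d] at h0
    rw [wzb_mul hΨd ((differentiableAt_const _).fun_mul (hf₁d.fun_sub hf₂d)),
      wzb_const_mul _ (hf₁d.fun_sub hf₂d), wzb_sub hf₁d hf₂d] at h1
    rw [wzb_mul hΨd ((differentiableAt_const _).fun_sub (hf₁d.fun_mul hf₂d)),
      wzb_const_sub _ (hf₁d.fun_mul hf₂d), wzb_mul hf₁d hf₂d] at h2
    rw [wzb_mul hΨd ((differentiableAt_const _).fun_add (hf₁d.fun_mul hf₂d)),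
      wzb_const_add _ (hf₁d.fun_mul hf₂d), wzb_mul hf₁d hf₂d] at h3
    unfold lorC
    rw [h0, h1, h2, h3]
    ring_nf
    simp only [Complex.I_sq]
    ring
  refine ⟨main, fun hΨne hlor z hz => ?_⟩
  have h := (main z hz).symm.trans (hlor z hz)
  have h4 : (4 : ℂ) * Ψ z ^ 2 ≠ 0 := by
    simp [pow_eq_zero_iff, hΨne z hz]
  rcases mul_eq_zero.mp h with h' | h'
  · rcases mul_eq_zero.mp h' with h'' | h''
    · exact absurd h'' h4
    · exact Or.inl h''
  · exact Or.inr h'
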